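/- Let X be a compactum. The maps εX : X → DX and κX : D(DX) → DX are well defined (εX(x) ∈ DX for every x ∈ X and κX(F) ∈ DX for every F ∈ D(DX)), and the unit laws hold: κX ∘ D(εX) = id_{DX} and κX ∘ ε_{DX} = id_{DX}. -/

import Mathlib

/-- Membership in `DX`: an upper semicontinuous function `X → [-∞, 0]`
attaining the maximal value `0`. -/
def MemD {X : Type*} [TopologicalSpace X] (f : X → EReal) : Prop :=
  UpperSemicontinuous f ∧ (∀ x, f x ≤ 0) ∧ ∃ x, f x = 0
/-- The space `DX` of densities. -/
structure Dspace (X : Type*) [TopologicalSpace X] where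
  toFun : X → EReal
  memD : MemD toFun

/-- The topology on `DX` generated by the subbase of sets
`S₋(A,t) = {f : f(a) < t for all a ∈ A}` (`A` closed, `t ∈ [-∞,0]`) and
`S₊(U,t) = {f : f(a) > t for some a ∈ U}` (`U` open, `t ∈ [-∞,0]`). -/
instance (X : Type*) [TopologicalSpace X] : TopologicalSpace (Dspace X) :=
  TopologicalSpace.generateFrom
    ({S | ∃ (A : Set X) (t : EReal), IsClosed A ∧ t ≤ 0 ∧
        S = {f : Dspace X | ∀ a ∈ A, f.toFun a < t}} ∪
     {S | ∃ (U : Set X) (t : EReal), IsOpen U ∧ t ≤ 0 ∧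
        S = {f : Dspace X | ∃ a ∈ U, t < f.toFun a}})
open Classical in
/-- The unit `εX(x) ∈ DX`: `εX(x)(y) = 0` if `y = x` and `-∞` otherwise. -/
noncomputable def epsFun {X : Type*} (x : X) : X → EReal :=
  fun y => if y = x then 0 else ⊥

/-- The multiplication `κX(F)(x) = max{f(x) + F(f) : f ∈ DX}` for `F : DX → [-∞,0]`. -/
noncomputable def kappaFun (X : Type*) [TopologicalSpace X] (F : Dspace X → EReal) :
    X → EReal :=
  fun x => ⨆ f : Dspace X, f.toFun x + F f

open Filter Topology Set TopologicalSpace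

section Aux
variable {X : Type*} [TopologicalSpace X]

lemma ereal_pick {u v t : EReal} (hu : u ≤ 0) (hv : v ≤ 0) (h : u + v < t) :
    ∃ a b : ℝ, u < a ∧ v < b ∧ (a : EReal) + (b : EReal) < t := by
  have hu' : u ≠ ⊤ := fun hh => by simp [hh] at hu
  have hv' : v ≠ ⊤ := fun hh => by simp [hh] at hv
  have hbt : (⊥ : EReal) < t := lt_of_le_of_lt bot_le h
  have hlt1 : ∀ w : EReal, w ≤ 0 → w < ((1:ℝ) : EReal) := fun w hw =>
    lt_of_le_of_lt hw (by exact_mod_cast zero_lt_one)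
  rcases eq_or_ne u ⊥ with hub | hub
  · rcases eq_or_ne t ⊤ with ht | ht
    · refine ⟨1, 1, ?_, hlt1 v hv, ?_⟩
      · rw [hub]; exact EReal.bot_lt_coe 1
      · rw [ht, ← EReal.coe_add]; exact EReal.coe_lt_top _
    · obtain ⟨r, rfl⟩ : ∃ r : ℝ, t = r := by
        induction t using EReal.rec with
        | bot => simp at hbt
        | coe r => exact ⟨r, rfl⟩
        | top => simp at ht
      refine ⟨r - 2, 1, ?_, hlt1 v hv, ?_⟩
      · rw [hub]; exact EReal.bot_lt_coe _
      · rw [← EReal.coe_add]; exact_mod_cast by linarith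
  · rcases eq_or_ne v ⊥ with hvb | hvb
    · rcases eq_or_ne t ⊤ with ht | ht
      · refine ⟨1, 1, hlt1 u hu, ?_, ?_⟩
        · rw [hvb]; exact EReal.bot_lt_coe 1
        · rw [ht, ← EReal.coe_add]; exact EReal.coe_lt_top _
      · obtain ⟨r, rfl⟩ : ∃ r : ℝ, t = r := by
          induction t using EReal.rec with
          | bot => simp at hbt
          | coe r => exact ⟨r, rfl⟩
          | top => simp at ht
        refine ⟨1, r - 2, hlt1 u hu, ?_, ?_⟩
        · rw [hvb]; exact EReal.bot_lt_coe _
        · rw [← EReal.coe_add]; exact_mod_cast by linarith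
    · obtain ⟨p, rfl⟩ : ∃ r : ℝ, u = r := by
        induction u using EReal.rec with
        | bot => simp at hub
        | coe r => exact ⟨r, rfl⟩
        | top => simp at hu'
      obtain ⟨q, rfl⟩ : ∃ r : ℝ, v = r := by
        induction v using EReal.rec with
        | bot => simp at hvb
        | coe r => exact ⟨r, rfl⟩
        | top => simp at hv'
      rcases eq_or_ne t ⊤ with ht | ht
      · refine ⟨p + 1, q + 1, by exact_mod_cast by linarith, by exact_mod_cast by linarith, ?_⟩
        rw [ht, ← EReal.coe_add]; exact EReal.coe_lt_top _
      · obtain ⟨r, rfl⟩ : ∃ r : ℝ, t = r := by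
          induction t using EReal.rec with
          | bot => simp at hbt
          | coe r => exact ⟨r, rfl⟩
          | top => simp at ht
        have hpq : p + q < r := by rw [← EReal.coe_add] at h; exact_mod_cast h
        refine ⟨p + (r - p - q)/3, q + (r - p - q)/3, by exact_mod_cast by linarith,
          by exact_mod_cast by linarith, ?_⟩
        rw [← EReal.coe_add]; exact_mod_cast by linarith

/-- the subbase of the topology on `Dspace X` -/
def subB (X : Type*) [TopologicalSpace X] : Set (Set (Dspace X)) :=
  ({S | ∃ (A : Set X) (t : EReal), IsClosed A ∧ t ≤ 0 ∧
        S = {f : Dspace X | ∀ a ∈ A, f.toFun a < t}} ∪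
     {S | ∃ (U : Set X) (t : EReal), IsOpen U ∧ t ≤ 0 ∧
        S = {f : Dspace X | ∃ a ∈ U, t < f.toFun a}})

lemma dtop_eq : (inferInstance : TopologicalSpace (Dspace X)) =
    TopologicalSpace.generateFrom (subB X) := rfl

lemma isOpen_subB {s : Set (Dspace X)} (hs : s ∈ subB X) : IsOpen s :=
  TopologicalSpace.isOpen_generateFrom_of_mem hs

lemma nhds_D (f : Dspace X) : 𝓝 f = ⨅ s ∈ {s | f ∈ s ∧ s ∈ subB X}, 𝓟 s :=
  TopologicalSpace.nhds_generateFrom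

/-- limsup of the sup over `S` along an ultrafilter -/
noncomputable def climsup (𝒰 : Ultrafilter (Dspace X)) (S : Set X) : EReal :=
  Filter.limsup (fun g : Dspace X => ⨆ y ∈ S, g.toFun y) 𝒰

lemma climsup_le_zero (𝒰 : Ultrafilter (Dspace X)) (S : Set X) : climsup 𝒰 S ≤ 0 :=
  Filter.limsup_le_of_le (by isBoundedDefault)
    (Filter.Eventually.of_forall fun g => iSup₂_le fun y _ => g.memD.2.1 y)

/-- the candidate limit of an ultrafilter in `Dspace X` -/
noncomputable def flim (𝒰 : Ultrafilter (Dspace X)) (x : X) : EReal :=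
  ⨅ U ∈ {U : Set X | IsOpen U ∧ x ∈ U}, climsup 𝒰 U

lemma flim_le (𝒰 : Ultrafilter (Dspace X)) {x : X} {U : Set X} (hU : IsOpen U) (hx : x ∈ U) :
    flim 𝒰 x ≤ climsup 𝒰 U :=
  iInf₂_le U ⟨hU, hx⟩

lemma flim_lt_iff (𝒰 : Ultrafilter (Dspace X)) {x : X} {t : EReal} :
    flim 𝒰 x < t ↔ ∃ U : Set X, IsOpen U ∧ x ∈ U ∧ climsup 𝒰 U < t := by
  rw [flim, iInf_lt_iff]
  constructor
  · rintro ⟨U, hU⟩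
    rw [iInf_lt_iff] at hU
    obtain ⟨⟨h1, h2⟩, h3⟩ := hU
    exact ⟨U, h1, h2, h3⟩
  · rintro ⟨U, h1, h2, h3⟩
    exact ⟨U, by rw [iInf_lt_iff]; exact ⟨⟨h1, h2⟩, h3⟩⟩

lemma flim_usc (𝒰 : Ultrafilter (Dspace X)) : UpperSemicontinuous (flim 𝒰) := by
  intro x t hxt
  obtain ⟨U, hU, hxU, hcU⟩ := (flim_lt_iff 𝒰).1 hxt
  filter_upwards [hU.mem_nhds hxU] with y hy
  exact lt_of_le_of_lt (flim_le 𝒰 hU hy) hcU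

lemma flim_le_zero (𝒰 : Ultrafilter (Dspace X)) (x : X) : flim 𝒰 x ≤ 0 :=
  le_trans (flim_le 𝒰 isOpen_univ (Set.mem_univ x)) (climsup_le_zero 𝒰 univ)

lemma flim_exists_zero [CompactSpace X] (𝒰 : Ultrafilter (Dspace X)) :
    ∃ x : X, flim 𝒰 x = 0 := by
  by_contra hc
  push_neg at hc
  have hlt : ∀ x : X, flim 𝒰 x < 0 := fun x => lt_of_le_of_ne (flim_le_zero 𝒰 x) (hc x)
  have hU : ∀ x : X, ∃ U : Set X, IsOpen U ∧ x ∈ U ∧ climsup 𝒰 U < 0 :=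
    fun x => (flim_lt_iff 𝒰).1 (hlt x)
  choose U hUo hUx hUc using hU
  obtain ⟨I, hI⟩ := isCompact_univ.elim_finite_subcover U hUo
    (fun x _ => Set.mem_iUnion.2 ⟨x, hUx x⟩)
  have hev : ∀ᶠ g : Dspace X in 𝒰, ∀ x ∈ I, (⨆ y ∈ U x, g.toFun y) < 0 := by
    rw [Filter.eventually_all_finset]
    exact fun x _ => Filter.eventually_lt_of_limsup_lt (hUc x)
  obtain ⟨g, hg⟩ := 𝒰.nonempty_of_mem hev
  obtain ⟨z, hz⟩ := g.memD.2.2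
  obtain ⟨x, hxI, hzx⟩ := Set.mem_iUnion₂.1 (hI (Set.mem_univ z))
  have : g.toFun z ≤ ⨆ y ∈ U x, g.toFun y := le_iSup₂ (f := fun y (_ : y ∈ U x) => g.toFun y) z hzx
  rw [hz] at this
  exact absurd (lt_of_le_of_lt this (hg x hxI)) (lt_irrefl 0)

section Conv
variable [CompactSpace X]

/-- the candidate limit as an element of `Dspace X` -/
noncomputable def flimD (𝒰 : Ultrafilter (Dspace X)) : Dspace X :=
  ⟨flim 𝒰, flim_usc 𝒰, flim_le_zero 𝒰, flim_exists_zero 𝒰⟩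

lemma conv (𝒰 : Ultrafilter (Dspace X)) : (𝒰 : Filter (Dspace X)) ≤ 𝓝 (flimD 𝒰) := by
  rw [nhds_D]
  refine le_iInf₂_iff.2 ?_
  rintro s ⟨hfs, hs | hs⟩
  · -- S₋(A, t)
    obtain ⟨A, t, hA, ht, rfl⟩ := hs
    rw [Filter.le_principal_iff]
    -- every a ∈ A has an open nbhd U with climsup 𝒰 U < t
    have hU : ∀ a : X, a ∈ A → ∃ U : Set X, IsOpen U ∧ a ∈ U ∧ climsup 𝒰 U < t := by
      intro a ha
      exact (flim_lt_iff 𝒰).1 (hfs a ha)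
    choose! U hUo hUx hUc using hU
    obtain ⟨I, hI⟩ := (hA.isCompact).elim_finite_subcover (fun a : A => U a)
      (fun a => hUo a a.2)
      (fun a ha => Set.mem_iUnion.2 ⟨⟨a, ha⟩, hUx a ha⟩)
    have hev : ∀ᶠ g : Dspace X in 𝒰, ∀ a ∈ I, (⨆ y ∈ U (a : X), g.toFun y) < t := by
      rw [Filter.eventually_all_finset]
      exact fun a _ => Filter.eventually_lt_of_limsup_lt (hUc a a.2)
    refine Filter.mem_of_superset hev ?_
    intro g hg b hb
    obtain ⟨a, haI, hba⟩ := Set.mem_iUnion₂.1 (hI hb)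
    exact lt_of_le_of_lt (le_iSup₂ (f := fun y (_ : y ∈ U (a : X)) => g.toFun y) b hba)
      (hg a haI)
  · -- S₊(V, t)
    obtain ⟨V, t, hV, ht, rfl⟩ := hs
    rw [Filter.le_principal_iff]
    obtain ⟨a, haV, hat⟩ := hfs
    have h1 : t < climsup 𝒰 V := lt_of_lt_of_le hat (flim_le 𝒰 hV haV)
    have h2 : ∃ᶠ g : Dspace X in 𝒰, t < ⨆ y ∈ V, g.toFun y :=
      Filter.frequently_lt_of_lt_limsup (by isBoundedDefault) h1
    rw [Ultrafilter.frequently_iff_eventually] at h2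
    refine Filter.mem_of_superset h2 ?_
    intro g hg
    have hg' : t < ⨆ y ∈ V, g.toFun y := hg
    obtain ⟨y, hy⟩ := lt_iSup_iff.1 hg'
    obtain ⟨hyV, hty⟩ := lt_iSup_iff.1 hy
    exact ⟨y, hyV, hty⟩

end Conv


lemma isCompact_D [CompactSpace X] : IsCompact (Set.univ : Set (Dspace X)) := by
  rw [isCompact_iff_ultrafilter_le_nhds]
  intro 𝒰 _
  exact ⟨flimD 𝒰, Set.mem_univ _, conv 𝒰⟩

end Aux


lemma memD_eps {X : Type*} [TopologicalSpace X] [T1Space X] (x : X) : MemD (epsFun x) := by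
  refine ⟨?_, fun y => ?_, ⟨x, by simp [epsFun]⟩⟩
  · rw [upperSemicontinuous_iff_isOpen_preimage]
    intro t
    rcases lt_or_ge 0 t with ht | ht
    · have : epsFun x ⁻¹' Set.Iio t = Set.univ := by
        ext y
        simp only [Set.mem_preimage, Set.mem_Iio, Set.mem_univ, iff_true, epsFun]
        split_ifs
        · exact ht
        · exact lt_of_le_of_lt bot_le ht
      rw [this]; exact isOpen_univ
    · rcases eq_or_ne t ⊥ with rfl | htb
      · have : epsFun x ⁻¹' Set.Iio (⊥ : EReal) = ∅ := by
          ext y; simp [Set.mem_Iio]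
        rw [this]; exact isOpen_empty
      · have : epsFun x ⁻¹' Set.Iio t = {x}ᶜ := by
          ext y
          simp only [Set.mem_preimage, Set.mem_Iio, Set.mem_compl_iff, Set.mem_singleton_iff,
            epsFun]
          by_cases h : y = x
          · rw [if_pos h]
            exact ⟨fun hlt => absurd hlt (not_lt.2 ht), fun hne => absurd h hne⟩
          · rw [if_neg h]
            exact ⟨fun _ => h, fun _ => bot_lt_iff_ne_bot.2 htb⟩
        rw [this]; exact isOpen_compl_singleton
  · simp only [epsFun]
    split_ifs
    · exact le_refl 0
    · exact bot_le

lemma memD_kappa {X : Type*} [TopologicalSpace X] [CompactSpace X] [T2Space X]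
    (F : Dspace X → EReal) (hF : MemD F) : MemD (kappaFun X F) := by
  obtain ⟨Fusc, Fle, f0, hf0⟩ := hF
  have hle : ∀ x, kappaFun X F x ≤ 0 := fun x => iSup_le fun g => by
    calc g.toFun x + F g ≤ 0 + 0 := add_le_add (g.memD.2.1 x) (Fle g)
    _ = 0 := add_zero 0
  refine ⟨?_, hle, ?_⟩
  · intro x t hxt
    obtain ⟨s, hs1, hs2⟩ := exists_between hxt
    have key : ∀ g : Dspace X, ∃ (a b : ℝ) (K : Set X),
        IsClosed K ∧ x ∈ interior K ∧ (∀ y ∈ K, g.toFun y < (a : EReal)) ∧ F g < (b : EReal) ∧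
        ((a : EReal) + (b : EReal) < s) := by
      intro g
      have hgs : g.toFun x + F g < s :=
        lt_of_le_of_lt (le_iSup (fun h : Dspace X => h.toFun x + F h) g) hs1
      obtain ⟨a, b, hga, hFb, hab⟩ := ereal_pick (g.memD.2.1 x) (Fle g) hgs
      have hopen : IsOpen {y | g.toFun y < (a : EReal)} :=
        upperSemicontinuous_iff_isOpen_preimage.1 g.memD.1 (a : EReal)
      obtain ⟨K, hK, hxK, hKsub⟩ := exists_compact_subset hopen hga
      exact ⟨a, b, K, hK.isClosed, hxK, fun y hy => hKsub hy, hFb, hab⟩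
    choose a b K hKc hKx hKg hFb hab using key
    have hWopen : ∀ g : Dspace X,
        IsOpen {h : Dspace X | (∀ y ∈ K g, h.toFun y < (a g : EReal)) ∧ F h < (b g : EReal)} := by
      intro g
      have h2 : IsOpen {h : Dspace X | F h < (b g : EReal)} :=
        upperSemicontinuous_iff_isOpen_preimage.1 Fusc (b g)
      have h1 : IsOpen {h : Dspace X | ∀ y ∈ K g, h.toFun y < (a g : EReal)} := by
        rcases le_or_gt ((a g : EReal)) 0 with h0 | h0
        · exact isOpen_subB (Or.inl ⟨K g, a g, hKc g, h0, rfl⟩)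
        · have : {h : Dspace X | ∀ y ∈ K g, h.toFun y < (a g : EReal)} = Set.univ := by
            ext h
            simp only [Set.mem_setOf_eq, Set.mem_univ, iff_true]
            exact fun y _ => lt_of_le_of_lt (h.memD.2.1 y) h0
          rw [this]; exact isOpen_univ
      exact h1.inter h2
    obtain ⟨I, hI⟩ := isCompact_D.elim_finite_subcover _ hWopen
      (fun g _ => Set.mem_iUnion.2 ⟨g, fun y hy => hKg g y hy, hFb g⟩)
    have hUopen : IsOpen (⋂ g ∈ I, interior (K g)) :=
      isOpen_biInter_finset fun g _ => isOpen_interior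
    have hxU : x ∈ ⋂ g ∈ I, interior (K g) := Set.mem_iInter₂.2 fun g _ => hKx g
    filter_upwards [hUopen.mem_nhds hxU] with y hy
    refine lt_of_le_of_lt (iSup_le fun h => ?_) hs2
    obtain ⟨g, hgI, hh⟩ := Set.mem_iUnion₂.1 (hI (Set.mem_univ h))
    have hy' : y ∈ K g := interior_subset (Set.mem_iInter₂.1 hy g hgI)
    calc h.toFun y + F h ≤ (a g : EReal) + (b g : EReal) :=
          add_le_add (le_of_lt (hh.1 y hy')) (le_of_lt hh.2)
    _ ≤ s := le_of_lt (hab g)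
  · obtain ⟨x0, hx0⟩ := f0.memD.2.2
    refine ⟨x0, le_antisymm (hle x0) ?_⟩
    have := le_iSup (fun g : Dspace X => g.toFun x0 + F g) f0
    rw [hx0, hf0, add_zero] at this
    exact this


lemma kappa_eps {X : Type*} [TopologicalSpace X] (f : Dspace X) :
    kappaFun X (epsFun f) = f.toFun := by
  funext x
  apply le_antisymm
  · apply iSup_le
    intro g
    by_cases h : g = f
    · subst h; simp [epsFun]
    · simp [epsFun, h]
  · have := le_iSup (fun g : Dspace X => g.toFun x + epsFun f g) f
    exact le_trans (by simp [epsFun]) this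

lemma eps_inj {X : Type*} {x y : X} (h : epsFun x = epsFun y) : x = y := by
  by_contra hne
  have h2 := congrFun h x
  simp only [epsFun, if_pos rfl, if_neg hne] at h2
  exact absurd h2 (by simp)

lemma kappa_Deps {X : Type*} [TopologicalSpace X] [T1Space X] (f : Dspace X) :
    kappaFun X (fun g : Dspace X => ⨆ x ∈ {x : X | epsFun x = g.toFun}, f.toFun x) =
      f.toFun := by
  funext z
  apply le_antisymm
  · apply iSup_le
    intro g
    show g.toFun z + (⨆ x ∈ {x : X | epsFun x = g.toFun}, f.toFun x) ≤ f.toFun z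
    rcases Set.eq_empty_or_nonempty {x : X | epsFun x = g.toFun} with he | ⟨y, hy⟩
    · rw [he]; simp
    · have hy' : epsFun y = g.toFun := hy
      have hsub : (⨆ x ∈ {x : X | epsFun x = g.toFun}, f.toFun x) ≤ f.toFun y := by
        apply iSup₂_le
        intro x hx
        have hxy : x = y := eps_inj (by rw [show epsFun x = g.toFun from hx, hy'])
        rw [hxy]
      have hgz : g.toFun z = epsFun y z := by rw [hy']
      calc g.toFun z + (⨆ x ∈ {x : X | epsFun x = g.toFun}, f.toFun x)
          ≤ epsFun y z + f.toFun y := by rw [hgz]; exact add_le_add le_rfl hsub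
        _ ≤ f.toFun z := by
            by_cases h : z = y
            · subst h; simp [epsFun]
            · simp [epsFun, h]
  · set g0 : Dspace X := ⟨epsFun z, memD_eps z⟩ with hg0
    have h1 := le_iSup
      (fun g : Dspace X => g.toFun z + ⨆ x ∈ {x : X | epsFun x = g.toFun}, f.toFun x) g0
    refine le_trans ?_ h1
    have hz : g0.toFun z = 0 := by simp [hg0, epsFun]
    rw [hz, zero_add]
    exact le_iSup₂ (f := fun x (_ : x ∈ {x : X | epsFun x = g0.toFun}) => f.toFun x) z rfl


/-- For a compactum `X`, the maps `εX : X → DX` and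
`κX : D(DX) → DX` are well defined, and the unit laws hold:
`κX ∘ D(εX) = id` and `κX ∘ ε_{DX} = id` on `DX`.  (Here
`D(εX)(f)(g) = max f(εX⁻¹(g)) = ⨆ {f(x) : εX(x) = g}`.) -/
theorem stmt8 {X : Type*} [TopologicalSpace X] [CompactSpace X] [T2Space X] :
    (∀ x : X, MemD (epsFun x)) ∧
    (∀ F : Dspace X → EReal, MemD F → MemD (kappaFun X F)) ∧
    (∀ f : Dspace X,
        kappaFun X
          (fun g : Dspace X => ⨆ x ∈ {x : X | epsFun x = g.toFun}, f.toFun x) =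
        f.toFun) ∧
    (∀ f : Dspace X, kappaFun X (epsFun f) = f.toFun) := by
  exact ⟨fun x => memD_eps x, fun F hF => memD_kappa F hF,
    fun f => kappa_Deps f, fun f => kappa_eps f⟩
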